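/- Let M be a matroid with ground set [m], let π be a flag of subsets of [m] with members ∅ ≠ S_1 ⊊ S_2 ⊊ ⋯ ⊊ S_l = [m], and let u ∈ ℤ^m with Σ_{j=1}^m u_j = 1. If Σ_{j∈S_k} u_j > 1 for some k, then rk_M(A_π(u)) = 0. Otherwise, letting t be the minimal index with Σ_{j∈S_t} u_j = 1 (which exists since Σ_{j∈S_l} u_j = 1), one has rk_M(A_π(u)) = rk_M(S_t). -/

import Mathlib

open scoped Classical

/-- A flag of subsets of `[m]`: a finite set of nonempty subsets of `Fin m`, totally
ordered by inclusion, containing the full set `[m]`.  Its length is `π.card`. -/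
def IsFlag (m : ℕ) (π : Finset (Finset (Fin m))) : Prop :=
  (∀ S ∈ π, S.Nonempty) ∧ Finset.univ ∈ π ∧ ∀ S ∈ π, ∀ T ∈ π, S ⊆ T ∨ T ⊆ S

/-- The rank of a set `X` in a matroid `M`: the largest cardinality of an
independent subset of `X`. -/
noncomputable def matroidRk {α : Type*} (M : Matroid α) (X : Set α) : ℕ :=
  sSup {n : ℕ | ∃ I, M.Indep I ∧ I ⊆ X ∧ I.ncard = n}

/-- The weight-`u` space of sections `H⁰(U_σ, E_M)_u = A_π(u)` for the flag `π`. -/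
def Aflag (m : ℕ) (M : Matroid (Fin m)) (u : Fin m → ℤ) (π : Finset (Finset (Fin m))) :
    Set (Fin m) :=
  {i | ∀ S ∈ π,
    if i ∈ M.closure (S : Set (Fin m)) then (∑ j ∈ S, u j) ≤ 1 else (∑ j ∈ S, u j) ≤ 0}

/-- If `J` is a basis of `X` in a matroid on a finite type, then `matroidRk M X = J.ncard`. -/
lemma matroidRk_eq_of_basis {α : Type*} [Finite α] {M : Matroid α} {J X : Set α}
    (hJ : M.IsBasis J X) : matroidRk M X = J.ncard := by
  have hbound : ∀ n ∈ {n : ℕ | ∃ I, M.Indep I ∧ I ⊆ X ∧ I.ncard = n}, n ≤ J.ncard := by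
    rintro n ⟨I, hI, hIX, rfl⟩
    obtain ⟨J', hJ', hIJ'⟩ := hI.subset_isBasis_of_subset hIX hJ.subset_ground
    have h1 : I.ncard ≤ J'.ncard := Set.ncard_le_ncard hIJ' J'.toFinite
    have h2 : J'.ncard = J.ncard := by
      rw [Set.ncard_def, hJ'.encard_eq_encard hJ, ← Set.ncard_def]
    omega
  have hmem : J.ncard ∈ {n : ℕ | ∃ I, M.Indep I ∧ I ⊆ X ∧ I.ncard = n} :=
    ⟨J, hJ.indep, hJ.subset, rfl⟩
  exact le_antisymm (csSup_le ⟨_, hmem⟩ hbound) (le_csSup ⟨J.ncard, hbound⟩ hmem)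

theorem rank_sections_on_chart (m : ℕ) (M : Matroid (Fin m)) (hE : M.E = Set.univ)
    (π : Finset (Finset (Fin m))) (hπ : IsFlag m π)
    (u : Fin m → ℤ) (hu : ∑ j, u j = 1) :
    ((∃ S ∈ π, 1 < ∑ j ∈ S, u j) → matroidRk M (Aflag m M u π) = 0) ∧
    ((∀ S ∈ π, (∑ j ∈ S, u j) ≤ 1) →
      ∀ T ∈ π, (∑ j ∈ T, u j) = 1 → (∀ S ∈ π, S ⊂ T → (∑ j ∈ S, u j) ≠ 1) →
        matroidRk M (Aflag m M u π) = matroidRk M (T : Set (Fin m))) := by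
  constructor
  · rintro ⟨S, hSπ, hS⟩
    have hA : Aflag m M u π = ∅ := by
      ext i
      simp only [Aflag, Set.mem_setOf_eq, Set.mem_empty_iff_false, iff_false]
      intro h
      have := h S hSπ
      split at this <;> omega
    rw [hA, matroidRk_eq_of_basis (M.empty_indep.isBasis_self), Set.ncard_empty]
  · intro hle T hTπ hT hmin
    have hA : Aflag m M u π = M.closure (T : Set (Fin m)) := by
      ext i
      constructor
      · intro hi
        have := hi T hTπ
        split at this
        · assumption
        · omega
      · intro hi S hSπ
        split
        · exact hle S hSπ
        · next hcl =>
            by_contra hpos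
            have hS1 : ∑ j ∈ S, u j = 1 := le_antisymm (hle S hSπ) (by omega)
            have hTS : (T : Set (Fin m)) ⊆ (S : Set (Fin m)) := by
              rcases hπ.2.2 S hSπ T hTπ with h | h
              · rcases eq_or_ne S T with rfl | hne
                · exact subset_rfl
                · exact absurd hS1 (hmin S hSπ ⟨h, fun hc => hne (le_antisymm h hc)⟩)
              · exact_mod_cast h
            exact hcl (M.closure_subset_closure hTS hi)
    obtain ⟨J, hJ⟩ := M.exists_isBasis (T : Set (Fin m)) (by rw [hE]; exact Set.subset_univ _)
    rw [hA, matroidRk_eq_of_basis hJ.isBasis_closure_right, matroidRk_eq_of_basis hJ]
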